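/- For all x_1, x_2 ∈ EuclideanSpace ℝ (Fin d), the function y ↦ L(x_1, x_2, y) (with x_1, x_2 fixed) is differentiable, and its gradient vanishes at the midpoint: ∇_y L evaluated at y = (x_1 + x_2)/2 equals 0. -/

import Mathlib

/-!
STATEMENT 14: The map `y ↦ L(x₁, x₂, y)` is differentiable and its gradient vanishes at
the midpoint `(x₁ + x₂)/2`.
-/

open RealInnerProductSpace

/-- Squared Euclidean distance `D(u,v) = ‖u − v‖²`. -/
noncomputable def sqDist {d : ℕ} (u v : EuclideanSpace ℝ (Fin d)) : ℝ := ‖u - v‖ ^ 2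

/-- Two-image one-caption contrastive loss
`L(x₁, x₂, y) = log 2 + D(x₁,y) + D(x₂,y) + log (exp (−D(x₁,y)) + exp (−D(x₂,y)))`. -/
noncomputable def twoImageLoss {d : ℕ} (x₁ x₂ y : EuclideanSpace ℝ (Fin d)) : ℝ :=
  Real.log 2 + sqDist x₁ y + sqDist x₂ y +
    Real.log (Real.exp (-sqDist x₁ y) + Real.exp (-sqDist x₂ y))

theorem twoImageLoss_gradient_vanishes_at_midpoint
    (d : ℕ) (x₁ x₂ : EuclideanSpace ℝ (Fin d)) :
    HasGradientAt (fun z => twoImageLoss x₁ x₂ z) 0 ((2 : ℝ)⁻¹ • (x₁ + x₂)) := by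
  set m : EuclideanSpace ℝ (Fin d) := (2 : ℝ)⁻¹ • (x₁ + x₂) with hm
  rw [hasGradientAt_iff_hasFDerivAt, map_zero]
  -- derivative of y ↦ xᵢ - y
  have hid₁ : HasFDerivAt (fun y : EuclideanSpace ℝ (Fin d) => x₁ - y)
      (-(ContinuousLinearMap.id ℝ (EuclideanSpace ℝ (Fin d)))) m := by
    simpa using (hasFDerivAt_id m).const_sub x₁
  have hid₂ : HasFDerivAt (fun y : EuclideanSpace ℝ (Fin d) => x₂ - y)
      (-(ContinuousLinearMap.id ℝ (EuclideanSpace ℝ (Fin d)))) m := by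
    simpa using (hasFDerivAt_id m).const_sub x₂
  set L₁ : EuclideanSpace ℝ (Fin d) →L[ℝ] ℝ :=
    2 • (innerSL ℝ (x₁ - m)).comp (-(ContinuousLinearMap.id ℝ (EuclideanSpace ℝ (Fin d))))
    with hL₁
  set L₂ : EuclideanSpace ℝ (Fin d) →L[ℝ] ℝ :=
    2 • (innerSL ℝ (x₂ - m)).comp (-(ContinuousLinearMap.id ℝ (EuclideanSpace ℝ (Fin d))))
    with hL₂
  have h1 : HasFDerivAt (fun y => sqDist x₁ y) L₁ m := hid₁.norm_sq
  have h2 : HasFDerivAt (fun y => sqDist x₂ y) L₂ m := hid₂.norm_sq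
  have hneg : x₂ - m = -(x₁ - m) := by
    rw [hm]; module
  have hLneg : L₂ = -L₁ := by
    ext v
    simp [hL₁, hL₂, hneg, inner_neg_left]
    ring
  have hDeq : sqDist x₂ m = sqDist x₁ m := by
    unfold sqDist; rw [hneg, norm_neg]
  set E : ℝ := Real.exp (-sqDist x₁ m) with hE
  have hEpos : 0 < E := Real.exp_pos _
  have he1 : HasFDerivAt (fun y => Real.exp (-sqDist x₁ y)) ((-E) • L₁) m := by
    have := (Real.hasDerivAt_exp (-sqDist x₁ m)).comp_hasFDerivAt m h1.neg
    exact this.congr_fderiv (by simp [hE]; module)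
  have he2 : HasFDerivAt (fun y => Real.exp (-sqDist x₂ y)) ((-E) • L₂) m := by
    have := (Real.hasDerivAt_exp (-sqDist x₂ m)).comp_hasFDerivAt m h2.neg
    exact this.congr_fderiv (by simp [hE, hDeq]; module)
  have hS : HasFDerivAt (fun y => Real.exp (-sqDist x₁ y) + Real.exp (-sqDist x₂ y))
      ((-E) • L₁ + (-E) • L₂) m := he1.add he2
  have hSval : Real.exp (-sqDist x₁ m) + Real.exp (-sqDist x₂ m) = 2 * E := by
    rw [hDeq, hE]; ring
  have hlog : HasFDerivAt
      (fun y => Real.log (Real.exp (-sqDist x₁ y) + Real.exp (-sqDist x₂ y)))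
      ((2 * E)⁻¹ • ((-E) • L₁ + (-E) • L₂)) m := by
    have hne : Real.exp (-sqDist x₁ m) + Real.exp (-sqDist x₂ m) ≠ 0 := by
      rw [hSval]; positivity
    have := (Real.hasDerivAt_log hne).comp_hasFDerivAt m hS
    exact this.congr_fderiv (by rw [hSval])
  have htotal : HasFDerivAt (fun z => twoImageLoss x₁ x₂ z)
      (0 + L₁ + L₂ + (2 * E)⁻¹ • ((-E) • L₁ + (-E) • L₂)) m := by
    exact (((hasFDerivAt_const (Real.log 2) m).add h1).add h2).add hlog
  refine htotal.congr_fderiv ?_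
  rw [hLneg]
  simp
  module
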